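/- Let M be a finite dimensional graded R(α)-module over the KLR algebra of type A_n, and suppose the sequence i ∈ I^α contains m consecutive equal entries i, i.e., i = (…, i,…,i (m times), …). If dim(1_i M) > 0, then dim(1_i M) ≥ m!. -/

import Mathlib

open scoped BigOperators

/-- A word of length `d` in the index set `I = {1,…,n}` (encoded 0-based as `Fin n`). -/
abbrev Word (n d : ℕ) := Fin d → Fin n

/-- The content of a word: the element of `Q⁺` it represents. -/
def wContent {n d : ℕ} (w : Word n d) : Fin n → ℕ :=
  fun i => (Finset.univ.filter fun k => w k = i).card

/-- Entries of the type `A_n` Cartan matrix, on the 0-based indices. -/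
def cartanA (a b : ℕ) : ℤ :=
  if a = b then 2 else if a + 1 = b ∨ b + 1 = a then -1 else 0

/-- Generators of the KLR algebra `R(α)` of type `A_n`: idempotents `1_w`, dots `x_k`,
crossings `τ_s` (the crossing `τ_s` acts on strands `s, s+1`, 0-based). -/
inductive KLRGen (n d : ℕ) : Type
  | e : Word n d → KLRGen n d
  | x : Fin d → KLRGen n d
  | t : Fin (d - 1) → KLRGen n d

abbrev KLRFree (n d : ℕ) := FreeAlgebra ℂ (KLRGen n d)

def ge {n d : ℕ} (w : Word n d) : KLRFree n d := FreeAlgebra.ι ℂ (KLRGen.e w)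
def gx {n d : ℕ} (k : Fin d) : KLRFree n d := FreeAlgebra.ι ℂ (KLRGen.x k)
def gt {n d : ℕ} (s : Fin (d - 1)) : KLRFree n d := FreeAlgebra.ι ℂ (KLRGen.t s)

/-- The left strand of the crossing `τ_s`. -/
def posl {d : ℕ} (s : Fin (d - 1)) : Fin d := ⟨s.1, by have := s.isLt; omega⟩
/-- The right strand of the crossing `τ_s`. -/
def posr {d : ℕ} (s : Fin (d - 1)) : Fin d := ⟨s.1 + 1, by have := s.isLt; omega⟩

/-- The word with the entries at positions `s, s+1` exchanged. -/
def wswap {n d : ℕ} (s : Fin (d - 1)) (w : Word n d) : Word n d :=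
  w ∘ Equiv.swap (posl s) (posr s)

/-- The defining relations of the KLR algebra `R(α)` of type `A_n`. -/
inductive KLRRel (n d : ℕ) (α : Fin n → ℕ) : KLRFree n d → KLRFree n d → Prop
  | unit : KLRRel n d α
      (∑ w ∈ Finset.univ.filter (fun w : Word n d => wContent w = α), ge w) 1
  | offblock (w : Word n d) : wContent w ≠ α → KLRRel n d α (ge w) 0
  | orth (w w' : Word n d) : w ≠ w' → KLRRel n d α (ge w * ge w') 0
  | idem (w : Word n d) : KLRRel n d α (ge w * ge w) (ge w)
  | xe (k : Fin d) (w : Word n d) : KLRRel n d α (gx k * ge w) (ge w * gx k)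
  | te (s : Fin (d - 1)) (w : Word n d) :
      KLRRel n d α (gt s * ge w) (ge (wswap s w) * gt s)
  | xx (k l : Fin d) : KLRRel n d α (gx k * gx l) (gx l * gx k)
  | ttfar (s s' : Fin (d - 1)) : s.1 + 1 < s'.1 ∨ s'.1 + 1 < s.1 →
      KLRRel n d α (gt s * gt s') (gt s' * gt s)
  | tsq (s : Fin (d - 1)) (w : Word n d) :
      KLRRel n d α (gt s * gt s * ge w)
        (if w (posl s) = w (posr s) then 0
         else if cartanA (w (posl s)).1 (w (posr s)).1 = 0 then ge w
         else (gx (posl s) + gx (posr s)) * ge w)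
  | braid (s s' : Fin (d - 1)) (h : s'.1 = s.1 + 1) (w : Word n d) :
      KLRRel n d α ((gt s * gt s' * gt s - gt s' * gt s * gt s') * ge w)
        (if w (posl s) = w (posr s') ∧ cartanA (w (posl s)).1 (w (posr s)).1 = -1
         then ge w else 0)
  | txk (s : Fin (d - 1)) (k : Fin d) (w : Word n d) :
      KLRRel n d α ((gt s * gx k - gx (Equiv.swap (posl s) (posr s) k) * gt s) * ge w)
        (if k = posl s ∧ w (posl s) = w (posr s) then ge w
         else if k = posr s ∧ w (posl s) = w (posr s) then -(ge w) else 0)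

/-- The Khovanov–Lauda–Rouquier algebra `R(α)` of type `A_n`, for `α ∈ Q⁺` of height `d`. -/
abbrev KLR (n d : ℕ) (α : Fin n → ℕ) := RingQuot (KLRRel n d α)

/-- The idempotent `1_w ∈ R(α)`. -/
noncomputable def Ew {n d : ℕ} (α : Fin n → ℕ) (w : Word n d) : KLR n d α :=
  RingQuot.mkAlgHom ℂ (KLRRel n d α) (ge w)
/-- The dot `x_k ∈ R(α)`. -/
noncomputable def Xg {n d : ℕ} (α : Fin n → ℕ) (k : Fin d) : KLR n d α :=
  RingQuot.mkAlgHom ℂ (KLRRel n d α) (gx k)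
/-- The crossing `τ_s ∈ R(α)`. -/
noncomputable def Tg {n d : ℕ} (α : Fin n → ℕ) (s : Fin (d - 1)) : KLR n d α :=
  RingQuot.mkAlgHom ℂ (KLRRel n d α) (gt s)

/-- A grading on an `R(α)`-module `M`, making it a graded module: a direct sum decomposition
into `ℂ`-subspaces such that the `1_w` preserve degrees, the dots raise degrees by `2` and
the crossings `τ_s 1_w` shift degrees by `−a_{w_s, w_{s+1}}`. -/
structure KLRGrading (n d : ℕ) (α : Fin n → ℕ) (M : Type*) [AddCommGroup M] [Module ℂ M]
    [Module (KLR n d α) M] : Type _ where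
  piece : ℤ → Submodule ℂ M
  internal : DirectSum.IsInternal piece
  e_stable : ∀ (w : Word n d) (i : ℤ), ∀ m ∈ piece i, Ew α w • m ∈ piece i
  x_shift : ∀ (k : Fin d) (i : ℤ), ∀ m ∈ piece i, Xg α k • m ∈ piece (i + 2)
  t_shift : ∀ (s : Fin (d - 1)) (w : Word n d) (i : ℤ), ∀ m ∈ piece i,
      (Tg α s * Ew α w) • m ∈ piece (i - cartanA (w (posl s)).1 (w (posr s)).1)

/-- The word space `1_w M` of an `R(α)`-module, as a `ℂ`-subspace. -/
noncomputable def wordSpace {n d : ℕ} (α : Fin n → ℕ) (w : Word n d) (M : Type*)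
    [AddCommGroup M] [Module ℂ M] [Module (KLR n d α) M] : Submodule ℂ M :=
  Submodule.span ℂ (Set.range fun m : M => Ew α w • m)

/-! ### Auxiliary development -/

section KLRAux

variable {n d : ℕ} {α : Fin n → ℕ} {M : Type}
  [AddCommGroup M] [Module ℂ M] [Module (KLR n d α) M]
  [IsScalarTower ℂ (KLR n d α) M]

/-- The action of an element of the KLR algebra as a `ℂ`-linear endomorphism. -/
noncomputable def actL (a : KLR n d α) : Module.End ℂ M where
  toFun v := a • v
  map_add' := smul_add a
  map_smul' c v := by
    simp only [RingHom.id_apply]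
    rw [← algebraMap_smul (KLR n d α) c v, ← mul_smul, ← Algebra.commutes, mul_smul,
      algebraMap_smul]

lemma actL_apply (a : KLR n d α) (v : M) : actL (M := M) a v = a • v := rfl

lemma klr_rel {x y : KLRFree n d} (h : KLRRel n d α x y) :
    RingQuot.mkAlgHom ℂ (KLRRel n d α) x = RingQuot.mkAlgHom ℂ (KLRRel n d α) y :=
  RingQuot.mkAlgHom_rel ℂ h

variable (α) in
lemma Ew_idem (w : Word n d) : Ew α w * Ew α w = Ew α w := by
  simpa [Ew, map_mul] using klr_rel (α := α) (KLRRel.idem w)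

variable (α) in
lemma Xg_Ew (k : Fin d) (w : Word n d) : Xg α k * Ew α w = Ew α w * Xg α k := by
  simpa [Ew, Xg, map_mul] using klr_rel (α := α) (KLRRel.xe k w)

variable (α) in
lemma Tg_Ew (s : Fin (d - 1)) (w : Word n d) (hs : wswap s w = w) :
    Tg α s * Ew α w = Ew α w * Tg α s := by
  have h := klr_rel (α := α) (KLRRel.te s w)
  rw [hs] at h
  simpa [Ew, Tg, map_mul] using h

lemma posl_ne_posr {s : Fin (d - 1)} : posl s ≠ posr s := by
  simp [posl, posr, Fin.ext_iff]

variable (α) in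
lemma Tg_Xr (s : Fin (d - 1)) (w : Word n d) (heq : w (posl s) = w (posr s)) :
    Tg α s * Xg α (posr s) * Ew α w = Xg α (posl s) * Tg α s * Ew α w - Ew α w := by
  have h := klr_rel (α := α) (KLRRel.txk s (posr s) w)
  rw [if_neg (by rintro ⟨h1, -⟩; exact posl_ne_posr h1.symm),
    if_pos ⟨rfl, heq⟩, Equiv.swap_apply_right] at h
  simp only [map_mul, map_sub, map_neg] at h
  have h' : Tg α s * Xg α (posr s) * Ew α w - Xg α (posl s) * Tg α s * Ew α w
      = -(Ew α w) := by
    simpa [Ew, Tg, Xg, sub_mul] using h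
  rw [sub_eq_iff_eq_add] at h'
  rw [h']; abel

variable (α) in
lemma Tg_Xfar (s : Fin (d - 1)) (k : Fin d) (w : Word n d)
    (h1 : k ≠ posl s) (h2 : k ≠ posr s) :
    Tg α s * Xg α k * Ew α w = Xg α k * Tg α s * Ew α w := by
  have h := klr_rel (α := α) (KLRRel.txk s k w)
  rw [if_neg (by rintro ⟨h', -⟩; exact h1 h'), if_neg (by rintro ⟨h', -⟩; exact h2 h'),
    Equiv.swap_apply_of_ne_of_ne h1 h2] at h
  simp only [map_mul, map_sub, map_zero] at h
  have h' : Tg α s * Xg α k * Ew α w - Xg α k * Tg α s * Ew α w = 0 := by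
    simpa [Ew, Tg, Xg, sub_mul] using h
  exact sub_eq_zero.mp h'

end KLRAux
section KLRWin

variable {n d : ℕ} {α : Fin n → ℕ} {M : Type}
  [AddCommGroup M] [Module ℂ M] [Module (KLR n d α) M]
  [IsScalarTower ℂ (KLR n d α) M]

variable (α) in
/-- The dot on the `j`-th strand of the window (absolute position `p + j`).
The argument `w` is only used to fix `d`. -/
noncomputable def Yop (w : Word n d) (p j : ℕ) : Module.End ℂ M :=
  if h : p + j < d then actL (Xg α ⟨p + j, h⟩) else 0

variable (α) in
/-- The crossing of strands `r, r+1` of the window. -/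
noncomputable def Sop (w : Word n d) (p r : ℕ) : Module.End ℂ M :=
  if h : p + r < d - 1 then actL (Tg α ⟨p + r, h⟩) else 0

variable {w : Word n d} {p q : ℕ} {i₀ : Fin n}

section Window

variable (hq : p + q ≤ d)
  (hcons : ∀ k : Fin d, p ≤ k.1 → k.1 < p + q → w k = i₀)

include hq hcons in
lemma window_swap {r : ℕ} (hr : r + 1 < q) (h : p + r < d - 1) :
    wswap ⟨p + r, h⟩ w = w := by
  set s : Fin (d - 1) := ⟨p + r, h⟩ with hs
  have hl : w (posl s) = i₀ := hcons _ (by simp [posl, hs]) (by simp [posl, hs]; omega)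
  have hr' : w (posr s) = i₀ := hcons _ (by simp [posr, hs]; omega) (by simp [posr, hs]; omega)
  funext k
  simp only [wswap, Function.comp_apply]
  rcases eq_or_ne k (posl s) with h1 | h1
  · rw [h1, Equiv.swap_apply_left, hr', hl]
  rcases eq_or_ne k (posr s) with h2 | h2
  · rw [h2, Equiv.swap_apply_right, hr', hl]
  · rw [Equiv.swap_apply_of_ne_of_ne h1 h2]

include hq hcons in
lemma window_eq {r : ℕ} (hr : r + 1 < q) (h : p + r < d - 1) :
    w (posl (⟨p + r, h⟩ : Fin (d-1))) = w (posr (⟨p + r, h⟩ : Fin (d-1))) := by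
  have hl : w (posl (⟨p + r, h⟩ : Fin (d-1))) = i₀ :=
    hcons _ (by simp [posl]) (by simp [posl]; omega)
  have hr' : w (posr (⟨p + r, h⟩ : Fin (d-1))) = i₀ :=
    hcons _ (by simp [posr]; omega) (by simp [posr]; omega)
  rw [hl, hr']

end Window

section Vec

variable {v : M} (hv : Ew α w • v = v)

include hv in
lemma inV_Y (j : ℕ) : Ew α w • (Yop α w p j v) = Yop α w p j v := by
  unfold Yop; split_ifs with h
  · rw [actL_apply, ← mul_smul, ← Xg_Ew, mul_smul, hv]
  · simp

include hv in
lemma Sop_Yop_far {r t : ℕ} (hrt : r + 2 ≤ t) :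
    Sop α w p r (Yop α w p t v) = Yop α w p t (Sop α w p r v) := by
  unfold Sop Yop
  split_ifs with h1 h2
  · simp only [actL_apply]
    have e1 : Tg α (⟨p + r, h1⟩ : Fin (d-1)) • (Xg α (⟨p + t, h2⟩ : Fin d) • v)
        = (Tg α ⟨p + r, h1⟩ * Xg α ⟨p + t, h2⟩ * Ew α w) • v := by
      rw [mul_smul, mul_smul, hv]
    rw [e1, Tg_Xfar α _ _ w (by simp [posl, Fin.ext_iff]; omega)
      (by simp [posr, Fin.ext_iff]; omega), mul_smul, mul_smul, hv]
  all_goals simp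

end Vec

section VecWin

variable (hq : p + q ≤ d)
  (hcons : ∀ k : Fin d, p ≤ k.1 → k.1 < p + q → w k = i₀)
  {v : M} (hv : Ew α w • v = v)

include hq hcons hv in
lemma inV_S {r : ℕ} (hr : r + 1 < q) : Ew α w • (Sop α w p r v) = Sop α w p r v := by
  have h : p + r < d - 1 := by omega
  rw [Sop, dif_pos h, actL_apply, ← mul_smul, ← Tg_Ew α _ w (window_swap hq hcons hr h),
    mul_smul, hv]

include hq hcons hv in
lemma Sop_Yr1 {r : ℕ} (hr : r + 1 < q) :
    Sop α w p r (Yop α w p (r + 1) v) = Yop α w p r (Sop α w p r v) - v := by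
  have hS : p + r < d - 1 := by omega
  have hY1 : p + (r + 1) < d := by omega
  have hY0 : p + r < d := by omega
  rw [Sop, dif_pos hS, Yop, dif_pos hY1, Yop, dif_pos hY0]
  simp only [actL_apply]
  have hposr : (⟨p + (r + 1), hY1⟩ : Fin d) = posr (⟨p + r, hS⟩ : Fin (d-1)) := rfl
  have hposl : (⟨p + r, hY0⟩ : Fin d) = posl (⟨p + r, hS⟩ : Fin (d-1)) := rfl
  rw [hposr, hposl]
  have e1 : Tg α (⟨p + r, hS⟩ : Fin (d-1)) • (Xg α (posr (⟨p + r, hS⟩ : Fin (d-1))) • v)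
      = (Tg α ⟨p + r, hS⟩ * Xg α (posr ⟨p + r, hS⟩) * Ew α w) • v := by
    rw [mul_smul, mul_smul, hv]
  rw [e1, Tg_Xr α _ w (window_eq hq hcons hr hS), sub_smul, mul_smul, mul_smul, hv]

end VecWin

lemma inV_Ypow (j c : ℕ) : ∀ v : M, Ew α w • v = v →
    Ew α w • ((Yop α w p j ^ c) v) = (Yop α w p j ^ c) v := by
  induction c with
  | zero => intro v hv; simpa using hv
  | succ c ih =>
    intro v hv
    rw [pow_succ, Module.End.mul_apply]
    exact ih _ (inV_Y hv j)

lemma Sop_Ypow_far {r t : ℕ} (hrt : r + 2 ≤ t) (c : ℕ) : ∀ v : M, Ew α w • v = v →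
    Sop α w p r ((Yop α w p t ^ c) v) = (Yop α w p t ^ c) (Sop α w p r v) := by
  induction c with
  | zero => intro v _; simp
  | succ c ih =>
    intro v hv
    rw [pow_succ, Module.End.mul_apply, Module.End.mul_apply, ih _ (inV_Y hv t),
      Sop_Yop_far hv hrt]

end KLRWin
section KLRHop

variable {n d : ℕ} {α : Fin n → ℕ} {M : Type}
  [AddCommGroup M] [Module ℂ M] [Module (KLR n d α) M]
  [IsScalarTower ℂ (KLR n d α) M]

variable (α) in
/-- Complete homogeneous symmetric "polynomial" of degree `i` in the window dots
`Yop lo, …, Yop hi`. -/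
noncomputable def Hop (w : Word n d) (p : ℕ) (i lo hi : ℕ) : Module.End ℂ M :=
  if h : hi < lo then (if i = 0 then 1 else 0)
  else ∑ c ∈ Finset.range (i + 1), (Yop α w p lo) ^ c * Hop w p (i - c) (lo + 1) hi
termination_by hi + 1 - lo
decreasing_by omega

variable {w : Word n d} {p : ℕ}

lemma Hop_base {i lo hi : ℕ} (h : hi < lo) :
    Hop (M := M) α w p i lo hi = (if i = 0 then 1 else 0) := by
  rw [Hop, dif_pos h]

lemma Hop_step {i lo hi : ℕ} (h : lo ≤ hi) :
    Hop (M := M) α w p i lo hi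
      = ∑ c ∈ Finset.range (i + 1), (Yop α w p lo) ^ c * Hop α w p (i - c) (lo + 1) hi := by
  rw [Hop, dif_neg (by omega)]

lemma Hop_zero_aux : ∀ (fuel lo hi : ℕ), hi + 1 - lo ≤ fuel →
    Hop (M := M) α w p 0 lo hi = 1 := by
  intro fuel
  induction fuel with
  | zero => intro lo hi h; rw [Hop_base (by omega), if_pos rfl]
  | succ fuel ih =>
    intro lo hi h
    by_cases hlt : hi < lo
    · rw [Hop_base hlt, if_pos rfl]
    · rw [Hop_step (by omega), Finset.sum_range_one, pow_zero, one_mul,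
        ih (lo+1) hi (by omega)]

lemma Hop_zero (lo hi : ℕ) : Hop (M := M) α w p 0 lo hi = 1 :=
  Hop_zero_aux (hi + 1 - lo) lo hi le_rfl

lemma Hop_single (i t : ℕ) : Hop (M := M) α w p i t t = (Yop α w p t) ^ i := by
  rw [Hop_step (le_refl t)]
  rw [Finset.sum_eq_single i]
  · rw [Nat.sub_self, Hop_base (by omega), if_pos rfl, mul_one]
  · intro c hc hne
    rw [Hop_base (by omega), if_neg (by simp at hc; omega), mul_zero]
  · intro h; exact absurd (Finset.self_mem_range_succ i) h

end KLRHop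
section KLRHop2

variable {n d : ℕ} {α : Fin n → ℕ} {M : Type}
  [AddCommGroup M] [Module ℂ M] [Module (KLR n d α) M]
  [IsScalarTower ℂ (KLR n d α) M]
  {w : Word n d} {p : ℕ}

lemma Hop_pair (i lo : ℕ) :
    Hop (M := M) α w p i lo (lo + 1)
      = ∑ a ∈ Finset.range (i + 1), (Yop α w p lo) ^ a * (Yop α w p (lo + 1)) ^ (i - a) := by
  rw [Hop_step (by omega)]
  exact Finset.sum_congr rfl fun a _ => by rw [Hop_single]

lemma Hop_pair_succ (c lo : ℕ) :
    Hop (M := M) α w p (c + 1) lo (lo + 1)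
      = Yop α w p lo * Hop α w p c lo (lo + 1) + (Yop α w p (lo + 1)) ^ (c + 1) := by
  rw [Hop_pair, Hop_pair, Finset.sum_range_succ']
  simp only [pow_zero, one_mul, Nat.succ_sub_succ]
  simp only [Nat.sub_zero]
  rw [Finset.mul_sum]
  congr 1
  refine Finset.sum_congr rfl fun a _ => ?_
  rw [pow_succ', mul_assoc]

lemma Hop_split {i r hi : ℕ} (h : r + 1 ≤ hi) :
    Hop (M := M) α w p i r hi
      = ∑ c ∈ Finset.range (i + 1),
          Hop α w p c r (r + 1) * Hop α w p (i - c) (r + 2) hi := by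
  rw [Hop_step (show r ≤ hi by omega)]
  calc ∑ a ∈ Finset.range (i + 1), (Yop α w p r) ^ a * Hop α w p (i - a) (r + 1) hi
      = ∑ a ∈ Finset.range (i + 1), ∑ b ∈ Finset.range (i - a + 1),
          (Yop α w p r) ^ a * ((Yop α w p (r + 1)) ^ b * Hop α w p (i - a - b) (r + 2) hi) := by
        refine Finset.sum_congr rfl fun a _ => ?_
        rw [Hop_step h, Finset.mul_sum]
    _ = ∑ c ∈ Finset.range (i + 1), ∑ e ∈ Finset.range (c + 1),
          (Yop α w p r) ^ e * (Yop α w p (r + 1)) ^ (c - e) * Hop α w p (i - c) (r + 2) hi := by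
        rw [Finset.sum_sigma', Finset.sum_sigma']
        refine Finset.sum_nbij' (fun x => ⟨x.1 + x.2, x.1⟩) (fun x => ⟨x.2, x.1 - x.2⟩)
          ?_ ?_ ?_ ?_ ?_
        · rintro ⟨a, b⟩ hx
          simp only [Finset.mem_sigma, Finset.mem_range] at hx ⊢
          omega
        · rintro ⟨c, e⟩ hx
          simp only [Finset.mem_sigma, Finset.mem_range] at hx ⊢
          omega
        · rintro ⟨a, b⟩ hx
          simp
        · rintro ⟨c, e⟩ hx
          simp only [Finset.mem_sigma, Finset.mem_range] at hx
          simp [Nat.add_sub_cancel' (show e ≤ c by omega)]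
        · rintro ⟨a, b⟩ hx
          simp only [Finset.mem_sigma, Finset.mem_range] at hx
          rw [Nat.add_sub_cancel_left, ← Nat.sub_sub, mul_assoc]
    _ = ∑ c ∈ Finset.range (i + 1),
          Hop α w p c r (r + 1) * Hop α w p (i - c) (r + 2) hi := by
        refine Finset.sum_congr rfl fun c _ => ?_
        rw [Hop_pair, Finset.sum_mul]

lemma inV_Hop : ∀ (fuel i lo hi : ℕ), hi + 1 - lo ≤ fuel → ∀ v : M, Ew α w • v = v →
    Ew α w • (Hop α w p i lo hi v) = Hop α w p i lo hi v := by
  intro fuel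
  induction fuel with
  | zero =>
    intro i lo hi h v hv
    rw [Hop_base (by omega)]
    split_ifs with hi0
    · simpa using hv
    · simp
  | succ fuel ih =>
    intro i lo hi h v hv
    by_cases hlt : hi < lo
    · rw [Hop_base hlt]
      split_ifs with hi0
      · simpa using hv
      · simp
    · rw [Hop_step (by omega), LinearMap.sum_apply, Finset.smul_sum]
      refine Finset.sum_congr rfl fun c _ => ?_
      rw [Module.End.mul_apply]
      exact inV_Ypow lo c _ (ih (i - c) (lo + 1) hi (by omega) v hv)

lemma Sop_Hop_far {r : ℕ} : ∀ (fuel i lo hi : ℕ), hi + 1 - lo ≤ fuel → r + 2 ≤ lo →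
    ∀ v : M, Ew α w • v = v →
    Sop α w p r (Hop α w p i lo hi v) = Hop α w p i lo hi (Sop α w p r v) := by
  intro fuel
  induction fuel with
  | zero =>
    intro i lo hi h hrlo v hv
    rw [Hop_base (by omega)]
    split_ifs with hi0 <;> simp
  | succ fuel ih =>
    intro i lo hi h hrlo v hv
    by_cases hlt : hi < lo
    · rw [Hop_base hlt]; split_ifs with hi0 <;> simp
    · rw [Hop_step (by omega), LinearMap.sum_apply, LinearMap.sum_apply, map_sum]
      refine Finset.sum_congr rfl fun c _ => ?_
      rw [Module.End.mul_apply, Module.End.mul_apply,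
        Sop_Ypow_far hrlo c _ (inV_Hop fuel (i - c) (lo + 1) hi (by omega) v hv),
        ih (i - c) (lo + 1) hi (by omega) (by omega) v hv]

end KLRHop2
section KLRMain

variable {n d : ℕ} {α : Fin n → ℕ} {M : Type}
  [AddCommGroup M] [Module ℂ M] [Module (KLR n d α) M]
  [IsScalarTower ℂ (KLR n d α) M]
  {w : Word n d} {p q : ℕ} {i₀ : Fin n}

variable (hq : p + q ≤ d)
  (hcons : ∀ k : Fin d, p ≤ k.1 → k.1 < p + q → w k = i₀)

include hq hcons in
lemma Sop_Ypair {r : ℕ} (hr : r + 1 < q) :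
    ∀ (c : ℕ) (v : M), Ew α w • v = v → Sop α w p r v = 0 →
    Sop α w p r (((Yop α w p (r + 1)) ^ (c + 1)) v) = -(Hop α w p c r (r + 1) v) := by
  intro c
  induction c with
  | zero =>
    intro v hv h0
    rw [pow_one, Sop_Yr1 hq hcons hv hr, h0, map_zero, zero_sub, Hop_zero,
      Module.End.one_apply]
  | succ c ih =>
    intro v hv h0
    have hu : Ew α w • (((Yop α w p (r + 1)) ^ (c + 1)) v) = ((Yop α w p (r + 1)) ^ (c + 1)) v :=
      inV_Ypow (r + 1) (c + 1) v hv
    rw [pow_succ', Module.End.mul_apply, Sop_Yr1 hq hcons hu hr, ih v hv h0, map_neg,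
      Hop_pair_succ, LinearMap.add_apply, Module.End.mul_apply]
    abel

include hq hcons in
lemma Sop_Hop_main {r hi : ℕ} (hr : r + 1 < q) (hlo : r + 1 ≤ hi) (i : ℕ) :
    ∀ v : M, Ew α w • v = v → Sop α w p r v = 0 →
    Sop α w p r (Hop α w p (i + 1) (r + 1) hi v) = -(Hop α w p i r hi v) := by
  intro v hv h0
  rw [Hop_step hlo, LinearMap.sum_apply, map_sum, Finset.sum_range_succ']
  simp only [Nat.succ_sub_succ, Nat.sub_zero, pow_zero, one_mul, Module.End.mul_apply]
  rw [Sop_Hop_far (hi + 1 - (r + 2)) (i + 1) (r + 2) hi le_rfl le_rfl v hv, h0, map_zero,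
    add_zero]
  have hterm : ∀ c ∈ Finset.range (i + 1),
      Sop α w p r (((Yop α w p (r + 1)) ^ (c + 1)) (Hop α w p (i - c) (r + 2) hi v))
        = -(Hop α w p c r (r + 1) (Hop α w p (i - c) (r + 2) hi v)) := by
    intro c _
    refine Sop_Ypair hq hcons hr c _ (inV_Hop (hi + 1 - (r + 2)) _ _ _ le_rfl v hv) ?_
    rw [Sop_Hop_far (hi + 1 - (r + 2)) _ _ _ le_rfl le_rfl v hv, h0, map_zero]
  rw [Finset.sum_congr rfl hterm, Hop_split hlo]
  simp only [LinearMap.sum_apply, Module.End.mul_apply, Finset.sum_neg_distrib]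

include hq hcons in
lemma extract_top {k : ℕ} (hkq : k + 1 ≤ q) (g : ℕ → M)
    (hgV : ∀ j, Ew α w • g j = g j)
    (hgS : ∀ j r, r < k → Sop α w p r (g j) = 0)
    (t : ℕ) (ht : t ≤ k)
    (hsum : ∑ j ∈ Finset.range (t + 1), ((Yop α w p k) ^ j) (g j) = 0) :
    g t = 0 := by
  have claim : ∀ a, a ≤ t →
      ∑ j ∈ Finset.range (t - a + 1), Hop α w p j (k - a) k (g (a + j)) = 0 := by
    intro a
    induction a with
    | zero => intro _; simpa [Hop_single] using hsum
    | succ a ih =>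
      intro ha
      have h1 := ih (by omega)
      have happ := congrArg (Sop α w p (k - a - 1)) h1
      rw [map_zero, map_sum, Finset.sum_range_succ'] at happ
      have hterm0 : Sop α w p (k - a - 1) (Hop α w p 0 (k - a) k (g (a + 0))) = 0 := by
        rw [Hop_zero, Module.End.one_apply]
        exact hgS _ _ (by omega)
      have hka : k - a = (k - a - 1) + 1 := by omega
      have hterm : ∀ j ∈ Finset.range (t - a),
          Sop α w p (k - a - 1) (Hop α w p (j + 1) (k - a) k (g (a + (j + 1))))
            = -(Hop α w p j (k - a - 1) k (g (a + (j + 1)))) := by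
        intro j _
        rw [hka]
        exact Sop_Hop_main hq hcons (by omega) (by omega) j _ (hgV _) (hgS _ _ (by omega))
      rw [Finset.sum_congr rfl hterm, hterm0, add_zero, Finset.sum_neg_distrib,
        neg_eq_zero] at happ
      have hre : t - a = t - (a + 1) + 1 := by omega
      have hidx : ∀ j, a + (j + 1) = (a + 1) + j := by omega
      rw [hre] at happ
      calc ∑ j ∈ Finset.range (t - (a + 1) + 1), Hop α w p j (k - (a + 1)) k (g (a + 1 + j))
          = ∑ j ∈ Finset.range (t - (a + 1) + 1), Hop α w p j (k - a - 1) k (g (a + (j + 1))) := by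
            refine Finset.sum_congr rfl fun j _ => ?_
            rw [hidx j]
            rfl
        _ = 0 := happ
  have := claim t le_rfl
  simpa [Hop_zero] using this

include hq hcons in
lemma extract_all {k : ℕ} (hkq : k + 1 ≤ q) (g : ℕ → M)
    (hgV : ∀ j, Ew α w • g j = g j)
    (hgS : ∀ j r, r < k → Sop α w p r (g j) = 0) :
    ∀ t, t ≤ k → (∑ j ∈ Finset.range (t + 1), ((Yop α w p k) ^ j) (g j) = 0) →
    ∀ j ≤ t, g j = 0 := by
  intro t
  induction t with
  | zero =>
    intro _ hsum j hj
    have : j = 0 := by omega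
    subst this
    simpa using hsum
  | succ t ih =>
    intro ht hsum j hj
    have htop : g (t + 1) = 0 := extract_top hq hcons hkq g hgV hgS (t + 1) ht hsum
    rcases Nat.lt_or_ge j (t + 1) with hj' | hj'
    · rw [Finset.sum_range_succ, htop, map_zero, add_zero] at hsum
      exact ih (by omega) hsum j (by omega)
    · have : j = t + 1 := by omega
      rw [this]; exact htop

end KLRMain
section KLRSub

variable {n d : ℕ} {α : Fin n → ℕ} {M : Type}
  [AddCommGroup M] [Module ℂ M] [Module (KLR n d α) M]
  [IsScalarTower ℂ (KLR n d α) M]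

variable (α) in
/-- The word space `1_w M` as the fixed space of the idempotent action. -/
noncomputable def Vsub (w : Word n d) : Submodule ℂ M :=
  LinearMap.ker (actL (M := M) (Ew α w) - 1)

lemma mem_Vsub {w : Word n d} {v : M} : v ∈ Vsub α w ↔ Ew α w • v = v := by
  simp [Vsub, LinearMap.mem_ker, LinearMap.sub_apply, actL_apply, sub_eq_zero]

lemma wordSpace_eq_Vsub (w : Word n d) : wordSpace α w M = Vsub α w := by
  apply le_antisymm
  · rw [wordSpace]
    rw [Submodule.span_le]
    rintro x ⟨u, rfl⟩
    rw [SetLike.mem_coe, mem_Vsub, ← mul_smul, Ew_idem]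
  · intro v hv
    rw [mem_Vsub] at hv
    rw [wordSpace]
    exact hv ▸ Submodule.subset_span ⟨v, rfl⟩

variable (α) in
/-- The subspace of `1_w M` killed by the first `k - 1` window crossings. -/
noncomputable def Asub (w : Word n d) (p k : ℕ) : Submodule ℂ M :=
  Vsub α w ⊓ ⨅ r ∈ Finset.range (k - 1), LinearMap.ker (Sop α w p r)

lemma mem_Asub {w : Word n d} {p k : ℕ} {v : M} :
    v ∈ Asub α w p k ↔ (Ew α w • v = v ∧ ∀ r, r < k - 1 → Sop α w p r v = 0) := by
  simp [Asub, Submodule.mem_inf, mem_Vsub, Submodule.mem_iInf, Finset.mem_range,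
    LinearMap.mem_ker]

variable {w : Word n d} {p q : ℕ} {i₀ : Fin n}

lemma asub_chain [FiniteDimensional ℂ M]
    (hq : p + q ≤ d) (hcons : ∀ k : Fin d, p ≤ k.1 → k.1 < p + q → w k = i₀)
    {k : ℕ} (hk1 : 1 ≤ k) (hkq : k + 1 ≤ q) :
    (k + 1) * Module.finrank ℂ (Asub (M := M) α w p (k + 1))
      ≤ Module.finrank ℂ (Asub (M := M) α w p k) := by
  classical
  let A1 := Asub (M := M) α w p (k + 1)
  let A0 := Asub (M := M) α w p k
  let Φ0 : (Fin (k + 1) → A1) →ₗ[ℂ] M :=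
    ∑ j : Fin (k + 1), ((Yop α w p k) ^ (j : ℕ)).comp ((A1.subtype).comp (LinearMap.proj j))
  have hΦ0 : ∀ gtup : Fin (k + 1) → A1,
      Φ0 gtup = ∑ j : Fin (k + 1), ((Yop α w p k) ^ (j : ℕ)) ((gtup j : M)) := by
    intro gtup
    simp [Φ0, LinearMap.sum_apply]
  have hmem : ∀ gtup : Fin (k + 1) → A1, Φ0 gtup ∈ A0 := by
    intro gtup
    rw [hΦ0, mem_Asub]
    constructor
    · rw [Finset.smul_sum]
      refine Finset.sum_congr rfl fun j _ => inV_Ypow _ _ _ ?_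
      exact (mem_Asub.mp (gtup j).2).1
    · intro r hr
      rw [map_sum]
      refine Finset.sum_eq_zero fun j _ => ?_
      have hg := mem_Asub.mp (gtup j).2
      rw [Sop_Ypow_far (show r + 2 ≤ k by omega) _ _ hg.1, hg.2 r (by omega), map_zero]
  let Φ : (Fin (k + 1) → A1) →ₗ[ℂ] A0 := Φ0.codRestrict A0 hmem
  have hinj : Function.Injective Φ := by
    rw [← LinearMap.ker_eq_bot]
    rw [Submodule.eq_bot_iff]
    intro gtup hker
    have h0 : ∑ j : Fin (k + 1), ((Yop α w p k) ^ (j : ℕ)) ((gtup j : M)) = 0 := by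
      rw [← hΦ0]
      have : Φ gtup = 0 := hker
      exact congrArg Subtype.val this
    let G : ℕ → M := fun j => if h : j < k + 1 then ((gtup ⟨j, h⟩ : M)) else 0
    have hsum : ∑ j ∈ Finset.range (k + 1), ((Yop α w p k) ^ j) (G j) = 0 := by
      rw [← Fin.sum_univ_eq_sum_range, ← h0]
      refine Finset.sum_congr rfl fun j _ => ?_
      simp [G, Nat.le_of_lt_succ j.isLt]
    have hall := extract_all hq hcons hkq G
      (by
        intro j
        by_cases h : j < k + 1
        · simpa [G, h, Nat.le_of_lt_succ h] using (mem_Asub.mp (gtup ⟨j, h⟩).2).1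
        · simp [G, h, show ¬ j ≤ k by omega])
      (by
        intro j r hrk
        by_cases h : j < k + 1
        · simp only [G, dif_pos h]
          exact (mem_Asub.mp (gtup ⟨j, h⟩).2).2 r (by omega)
        · simp [G, h, show ¬ j ≤ k by omega])
      k le_rfl hsum
    funext j
    have := hall j (by omega) -- G j = 0
    apply Subtype.ext
    simpa [G, j.isLt, Nat.le_of_lt_succ j.isLt] using this
  have hle := LinearMap.finrank_le_finrank_of_injective hinj
  have hpi : Module.finrank ℂ (Fin (k + 1) → A1) = (k + 1) * Module.finrank ℂ A1 := by
    rw [Module.finrank_pi_fintype ℂ]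
    simp [Finset.sum_const, Fintype.card_fin, mul_comm]
  rw [hpi] at hle
  exact hle

end KLRSub

/-- Let `M` be a finite dimensional graded module over the KLR algebra `R(α)`
of type `A_n`, and suppose the word `w ∈ I^α` contains `m` consecutive equal entries
(positions `p, p+1, …, p+m−1`).  If `dim 1_w M > 0` then `dim 1_w M ≥ m!`. -/
theorem wordspace_dim_ge_factorial (n d : ℕ) (α : Fin n → ℕ)
    (M : Type) [AddCommGroup M] [Module ℂ M] [Module (KLR n d α) M]
    [IsScalarTower ℂ (KLR n d α) M]
    (hgr : Nonempty (KLRGrading n d α M)) (hfd : FiniteDimensional ℂ M)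
    (w : Word n d) (hw : wContent w = α)
    (p m : ℕ) (hpm : p + m ≤ d)
    (i₀ : Fin n) (hcons : ∀ k : Fin d, p ≤ k.1 → k.1 < p + m → w k = i₀)
    (hpos : 0 < Module.finrank ℂ (wordSpace α w M)) :
    Nat.factorial m ≤ Module.finrank ℂ (wordSpace α w M) := by
    classical
  haveI := hfd
  obtain ⟨gr⟩ := hgr
  rw [wordSpace_eq_Vsub] at hpos ⊢
  rcases Nat.eq_zero_or_pos m with hm0 | hm1
  · subst hm0; exact hpos
  -- a nonzero vector of `Vsub`
  have hVne : Vsub (M := M) α w ≠ ⊥ := by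
    intro h
    rw [h] at hpos
    simp at hpos
  obtain ⟨v₀, hv₀V, hv₀ne⟩ := (Submodule.ne_bot_iff _).mp hVne
  have hv₀fix : Ew α w • v₀ = v₀ := mem_Vsub.mp hv₀V
  -- the set of degrees where the word space is nonzero
  set D : Set ℤ := {i | Vsub (M := M) α w ⊓ gr.piece i ≠ ⊥} with hD
  have hDne : D.Nonempty := by
    have htop : v₀ ∈ ⨆ i, gr.piece i := by
      rw [gr.internal.submodule_iSup_eq_top]; trivial
    have hsup : Ew α w • v₀ ∈ ⨆ i, (Vsub (M := M) α w ⊓ gr.piece i) := by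
      refine Submodule.iSup_induction (motive := fun x : M =>
        Ew α w • x ∈ ⨆ i, (Vsub (M := M) α w ⊓ gr.piece i)) _ htop ?_ ?_ ?_
      · intro i x hx
        refine Submodule.mem_iSup_of_mem i (Submodule.mem_inf.mpr ⟨?_, gr.e_stable w i x hx⟩)
        rw [mem_Vsub, ← mul_smul, Ew_idem]
      · simpa using Submodule.zero_mem _
      · intro x y hx hy
        rw [smul_add]
        exact Submodule.add_mem _ hx hy
    rw [hv₀fix] at hsup
    by_contra hne
    rw [Set.not_nonempty_iff_eq_empty] at hne
    have hbot : ∀ i : ℤ, Vsub (M := M) α w ⊓ gr.piece i = ⊥ := by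
      intro i
      by_contra hib
      have hiD : i ∈ D := hib
      rw [hne] at hiD
      exact hiD
    rw [iSup_congr hbot, iSup_bot] at hsup
    exact hv₀ne (Submodule.mem_bot ℂ |>.mp hsup)
  have hDfin : D.Finite := by
    have hind : iSupIndep (fun i => Vsub (M := M) α w ⊓ gr.piece i) :=
      gr.internal.submodule_iSupIndep.mono fun i => inf_le_right
    have hchoice : ∀ i : D, ∃ x : M, x ∈ (Vsub (M := M) α w ⊓ gr.piece i.1) ∧ x ≠ 0 := by
      rintro ⟨i, hi⟩
      obtain ⟨x, hx, hx0⟩ := (Submodule.ne_bot_iff _).mp hi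
      exact ⟨x, hx, hx0⟩
    choose x hx hx0 using hchoice
    have hli : LinearIndependent ℂ x :=
      (hind.comp Subtype.coe_injective).linearIndependent _ hx hx0
    haveI : IsNoetherian ℂ M := IsNoetherian.iff_fg.mpr hfd
    haveI : Finite D := hli.finite_of_isNoetherian
    exact D.toFinite
  have hFne : hDfin.toFinset.Nonempty := (Set.Finite.toFinset_nonempty hDfin).mpr hDne
  set imin := hDfin.toFinset.min' hFne with himin
  have himinD : imin ∈ D := by
    have := hDfin.toFinset.min'_mem hFne
    rwa [Set.Finite.mem_toFinset] at this
  obtain ⟨u₀, hu₀mem, hu₀ne⟩ := (Submodule.ne_bot_iff _).mp himinD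
  have hu₀V : u₀ ∈ Vsub (M := M) α w := (Submodule.mem_inf.mp hu₀mem).1
  have hu₀P : u₀ ∈ gr.piece imin := (Submodule.mem_inf.mp hu₀mem).2
  have hu₀fix : Ew α w • u₀ = u₀ := mem_Vsub.mp hu₀V
  -- `u₀` is a lowest-degree vector: killed by all window crossings
  have hlow : ∀ r, r + 1 < m → Sop α w p r u₀ = 0 := by
    intro r hr
    by_contra hne
    have hS : p + r < d - 1 := by omega
    have h1 : Sop α w p r u₀ ∈ Vsub (M := M) α w :=
      mem_Vsub.mpr (inV_S hpm hcons hu₀fix hr)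
    have h2 : Sop α w p r u₀ ∈ gr.piece (imin - 2) := by
      have hts := gr.t_shift ⟨p + r, hS⟩ w imin u₀ hu₀P
      have hca : cartanA (w (posl (⟨p + r, hS⟩ : Fin (d - 1)))).1
          (w (posr (⟨p + r, hS⟩ : Fin (d - 1)))).1 = 2 := by
        rw [hcons _ (by simp [posl]) (by simp [posl]; omega),
          hcons _ (by simp [posr]; omega) (by simp [posr]; omega)]
        simp [cartanA]
      rw [hca] at hts
      have heq : (Tg α ⟨p + r, hS⟩ * Ew α w) • u₀ = Sop α w p r u₀ := by
        rw [mul_smul, hu₀fix, Sop, dif_pos hS, actL_apply]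
      rwa [heq] at hts
    have hmem2 : (imin - 2) ∈ D := by
      rw [hD, Set.mem_setOf_eq]
      exact (Submodule.ne_bot_iff _).mpr ⟨Sop α w p r u₀, Submodule.mem_inf.mpr ⟨h1, h2⟩, hne⟩
    have : imin ≤ imin - 2 :=
      hDfin.toFinset.min'_le _ ((Set.Finite.mem_toFinset hDfin).mpr hmem2)
    omega
  -- the chain of inequalities
  have hAm : 1 ≤ Module.finrank ℂ (Asub (M := M) α w p m) := by
    have hu₀A : u₀ ∈ Asub (M := M) α w p m :=
      mem_Asub.mpr ⟨hu₀fix, fun r hr => hlow r (by omega)⟩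
    have : Nontrivial (Asub (M := M) α w p m) :=
      ⟨⟨u₀, hu₀A⟩, 0, by simp [Subtype.ext_iff, hu₀ne]⟩
    exact Module.finrank_pos_iff.mpr this
  have hchain : ∀ k, 1 ≤ k → k ≤ m →
      Nat.factorial k * Module.finrank ℂ (Asub (M := M) α w p k)
        ≤ Module.finrank ℂ (Asub (M := M) α w p 1) := by
    intro k
    induction k with
    | zero => intro h; omega
    | succ k ih =>
      intro _ hkm
      rcases Nat.eq_zero_or_pos k with hk0 | hk1
      · subst hk0
        simpa [Nat.factorial] using le_rfl
      · have h1 := asub_chain (α := α) (M := M) hpm hcons hk1 (by omega)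
        have h2 := ih hk1 (by omega)
        calc Nat.factorial (k + 1) * Module.finrank ℂ (Asub (M := M) α w p (k + 1))
            = Nat.factorial k * ((k + 1) * Module.finrank ℂ (Asub (M := M) α w p (k + 1))) := by
              rw [Nat.factorial_succ]; ring
          _ ≤ Nat.factorial k * Module.finrank ℂ (Asub (M := M) α w p k) :=
              Nat.mul_le_mul_left _ h1
          _ ≤ _ := h2
  have hA1 : Asub (M := M) α w p 1 = Vsub (M := M) α w := by
    ext v
    rw [mem_Asub, mem_Vsub]
    simp
  have hfinal := hchain m hm1 le_rfl
  rw [hA1] at hfinal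
  calc Nat.factorial m = Nat.factorial m * 1 := (mul_one _).symm
    _ ≤ Nat.factorial m * Module.finrank ℂ (Asub (M := M) α w p m) :=
        Nat.mul_le_mul_left _ hAm
    _ ≤ Module.finrank ℂ (Vsub (M := M) α w) := hfinal
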